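/- Let 𝔨 be a finite-dimensional real Lie algebra, let 𝔞 be a smooth solution of the Yang–Mills–Poisson equation, and let ε ∈ {1, −1}. Then the 𝔨-valued 1-form α with components α_j = ∂_s 𝔞_j + ε (*𝔟)_j satisfies the linear first-order evolution equation ∂_s α_j = ε ∑_{k,l} ε_{jkl} ∂_k^𝔞 α_l for all j and all s ≥ 0. (Hence the self-duality or anti-self-duality defect of a Yang–Mills–Poisson solution satisfies a linear homogeneous first-order equation; if it vanishes at s = 0 and uniqueness holds, the solution is self-dual resp. anti-self-dual.) -/

import Mathlib

/-- Partial derivative `∂_j f` of a function on `ℝ³` with values in a normed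
real vector space. -/
noncomputable def pd3 {𝕜 : Type*} [NormedAddCommGroup 𝕜] [NormedSpace ℝ 𝕜]
    (j : Fin 3) (f : (Fin 3 → ℝ) → 𝕜) (x : Fin 3 → ℝ) : 𝕜 :=
  fderiv ℝ f x (Pi.single j 1)

/-- The Levi-Civita symbol `ε_{ijk}` on `Fin 3`. -/
noncomputable def eps (i j k : Fin 3) : ℝ :=
  ((((i : ℤ) - (j : ℤ)) * ((j : ℤ) - (k : ℤ)) * ((k : ℤ) - (i : ℤ)) : ℤ) : ℝ) / 2

/-- Spatial curvature `𝔟_{jk}(x,s) = ∂_j 𝔞_k − ∂_k 𝔞_j + [𝔞_j, 𝔞_k]` of a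
time-dependent `𝔨`-valued gauge potential, with bracket `β`. -/
noncomputable def curvK {𝔨 : Type*} [NormedAddCommGroup 𝔨] [NormedSpace ℝ 𝔨]
    (β : 𝔨 →ₗ[ℝ] 𝔨 →ₗ[ℝ] 𝔨) (𝔞 : Fin 3 → (Fin 3 → ℝ) → ℝ → 𝔨) (j k : Fin 3)
    (x : Fin 3 → ℝ) (s : ℝ) : 𝔨 :=
  pd3 j (fun y => 𝔞 k y s) x - pd3 k (fun y => 𝔞 j y s) x
    + β (𝔞 j x s) (𝔞 k x s)

/-- The Yang–Mills–Poisson equation in temporal gauge: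
`∂_s² 𝔞_j = −∑_k ∂_k^𝔞 𝔟_{kj}` where `∂_k^𝔞 ξ = ∂_k ξ + [𝔞_k, ξ]`. -/
def YangMillsPoissonK {𝔨 : Type*} [NormedAddCommGroup 𝔨] [NormedSpace ℝ 𝔨]
    (β : 𝔨 →ₗ[ℝ] 𝔨 →ₗ[ℝ] 𝔨) (𝔞 : Fin 3 → (Fin 3 → ℝ) → ℝ → 𝔨) : Prop :=
  ∀ j x (s : ℝ), 0 ≤ s →
    deriv (fun τ => deriv (fun σ => 𝔞 j x σ) τ) s =
      -∑ k, (pd3 k (fun y => curvK β 𝔞 k j y s) x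
        + β (𝔞 k x s) (curvK β 𝔞 k j x s))

/-! ### Auxiliary material -/

section Aux

variable {𝔨 : Type*} [NormedAddCommGroup 𝔨] [NormedSpace ℝ 𝔨]

local notation "E3" => (Fin 3 → ℝ)

/-- Slices in the time direction: `HasDerivAt` version. -/
theorem YMaux.hasDerivAt_slice {g : E3 × ℝ → 𝔨} (hg : Differentiable ℝ g) (y : E3) (s : ℝ) :
    HasDerivAt (fun σ => g (y, σ)) (fderiv ℝ g (y, s) (0, 1)) s := by
  have h1 : HasDerivAt (fun σ : ℝ => (y, σ)) ((0 : E3), (1 : ℝ)) s :=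
    HasDerivAt.prodMk (hasDerivAt_const s y) (hasDerivAt_id s)
  exact (hg (y, s)).hasFDerivAt.comp_hasDerivAt s h1

theorem YMaux.hasFDerivAt_slice {g : E3 × ℝ → 𝔨} (hg : Differentiable ℝ g) (x : E3) (s : ℝ) :
    HasFDerivAt (fun y => g (y, s))
      ((fderiv ℝ g (x, s)).comp (ContinuousLinearMap.inl ℝ E3 ℝ)) x := by
  have h1 : HasFDerivAt (fun y : E3 => (y, s)) (ContinuousLinearMap.inl ℝ E3 ℝ) x :=
    HasFDerivAt.prodMk (hasFDerivAt_id x) (hasFDerivAt_const s x)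
  exact (hg (x, s)).hasFDerivAt.comp x h1

/-- Symmetry of mixed second derivatives for a smooth function on `ℝ³ × ℝ`. -/
theorem YMaux.mixed_symm {g : E3 × ℝ → 𝔨} (hg : ContDiff ℝ (⊤ : ℕ∞) g)
    (u v : E3 × ℝ) (p : E3 × ℝ) :
    fderiv ℝ (fun q => fderiv ℝ g q u) p v = fderiv ℝ (fun q => fderiv ℝ g q v) p u := by
  have hdiff : Differentiable ℝ g := hg.differentiable (by simp)
  have hF : ContDiff ℝ (⊤ : ℕ∞) (fderiv ℝ g) := hg.fderiv_right (by simp)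
  have hFd : DifferentiableAt ℝ (fderiv ℝ g) p := hF.differentiable (by simp) p
  have key := second_derivative_symmetric (f := g) (f' := fderiv ℝ g)
    (f'' := fderiv ℝ (fderiv ℝ g) p) (fun y => (hdiff y).hasFDerivAt) hFd.hasFDerivAt u v
  have e1 : fderiv ℝ (fun q => fderiv ℝ g q u) p v = fderiv ℝ (fderiv ℝ g) p v u := by
    have h2 : HasFDerivAt (fun q => fderiv ℝ g q u)
        ((ContinuousLinearMap.apply ℝ 𝔨 u).comp (fderiv ℝ (fderiv ℝ g) p)) p :=
      ((ContinuousLinearMap.apply ℝ 𝔨 u).hasFDerivAt).comp p hFd.hasFDerivAt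
    rw [h2.fderiv]; rfl
  have e2 : fderiv ℝ (fun q => fderiv ℝ g q v) p u = fderiv ℝ (fderiv ℝ g) p u v := by
    have h2 : HasFDerivAt (fun q => fderiv ℝ g q v)
        ((ContinuousLinearMap.apply ℝ 𝔨 v).comp (fderiv ℝ (fderiv ℝ g) p)) p :=
      ((ContinuousLinearMap.apply ℝ 𝔨 v).hasFDerivAt).comp p hFd.hasFDerivAt
    rw [h2.fderiv]; rfl
  rw [e1, e2, ← key]

/-- The bracket as a continuous bilinear map (possible since `𝔨` is
finite-dimensional). -/
noncomputable def YMaux.Bclm [FiniteDimensional ℝ 𝔨] (β : 𝔨 →ₗ[ℝ] 𝔨 →ₗ[ℝ] 𝔨) :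
    𝔨 →L[ℝ] 𝔨 →L[ℝ] 𝔨 :=
  LinearMap.toContinuousLinearMap
    ((LinearMap.toContinuousLinearMap : (𝔨 →ₗ[ℝ] 𝔨) ≃ₗ[ℝ] (𝔨 →L[ℝ] 𝔨)).toLinearMap.comp β)

theorem YMaux.Bclm_apply [FiniteDimensional ℝ 𝔨] (β : 𝔨 →ₗ[ℝ] 𝔨 →ₗ[ℝ] 𝔨) (a b : 𝔨) :
    YMaux.Bclm β a b = β a b := rfl

set_option maxHeartbeats 1000000 in
/-- The purely algebraic core of the computation. -/
theorem YMaux.algebra_core {𝔨' : Type*} [AddCommGroup 𝔨'] [Module ℝ 𝔨']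
    (β : 𝔨' →ₗ[ℝ] 𝔨' →ₗ[ℝ] 𝔨') (hskew : ∀ a b : 𝔨', β a b = -β b a)
    (ε : ℝ) (hε : ε = 1 ∨ ε = -1) (j : Fin 3)
    (A Dt : Fin 3 → 𝔨') (PD : Fin 3 → Fin 3 → 𝔨') (C : Fin 3 → Fin 3 → 𝔨')
    (PC : Fin 3 → Fin 3 → Fin 3 → 𝔨') (DD : 𝔨')
    (hCskew : ∀ m n, C m n = -C n m) (hCdiag : ∀ m, C m m = 0)
    (hPCskew : ∀ k m n, PC k m n = -PC k n m) (hPCdiag : ∀ k m, PC k m m = 0)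
    (hYMP : DD = -∑ k, (PC k k j + β (A k) (C k j))) :
    DD + ε • ((1 / 2 : ℝ) • ∑ k, ∑ l, eps j k l •
        (PD k l - PD l k + β (Dt k) (A l) + β (A k) (Dt l)))
      = ε • ∑ k, ∑ l, eps j k l •
        ((PD k l + ε • ((1 / 2 : ℝ) • ∑ m, ∑ n, eps l m n • PC k m n))
          + β (A k) (Dt l + ε • ((1 / 2 : ℝ) • ∑ m, ∑ n, eps l m n • C m n))) := by
  subst hYMP
  have hb : ∀ k l, β (Dt k) (A l) = -β (A l) (Dt k) := fun k l => hskew _ _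
  rcases hε with rfl | rfl <;> fin_cases j <;>
    simp only [Fin.sum_univ_three, Fin.zero_eta, Fin.mk_one, Fin.reduceFinMk] <;>
    norm_num [eps] <;>
    simp only [hb, hCskew 1 0, hCskew 2 0, hCskew 2 1,
      hPCskew 0 1 0, hPCskew 0 2 0, hPCskew 0 2 1,
      hPCskew 1 1 0, hPCskew 1 2 0, hPCskew 1 2 1,
      hPCskew 2 1 0, hPCskew 2 2 0, hPCskew 2 2 1,
      hCdiag, hPCdiag, map_add, map_neg, map_smul, map_zero, map_sum] <;>
    module

end Aux

/-- For a smooth solution `𝔞` of the Yang–Mills–Poisson equation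
(`𝔨` a finite-dimensional real Lie algebra) and `ε ∈ {1, −1}`, the 1-form
`α_j = ∂_s 𝔞_j + ε (*𝔟)_j` satisfies the linear first-order evolution equation
`∂_s α_j = ε ∑_{k,l} ε_{jkl} ∂_k^𝔞 α_l` for all `j` and all `s ≥ 0`. -/
theorem selfDuality_defect_linear_evolution
    (𝔨 : Type*) [NormedAddCommGroup 𝔨] [NormedSpace ℝ 𝔨] [FiniteDimensional ℝ 𝔨]
    (β : 𝔨 →ₗ[ℝ] 𝔨 →ₗ[ℝ] 𝔨)
    (halt : ∀ x : 𝔨, β x x = 0)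
    (hjac : ∀ x y z : 𝔨, β x (β y z) + β y (β z x) + β z (β x y) = 0)
    (𝔞 : Fin 3 → (Fin 3 → ℝ) → ℝ → 𝔨)
    (h𝔞 : ∀ j, ContDiff ℝ (⊤ : ℕ∞) fun p : (Fin 3 → ℝ) × ℝ => 𝔞 j p.1 p.2)
    (hYMP : YangMillsPoissonK β 𝔞)
    (ε : ℝ) (hε : ε = 1 ∨ ε = -1)
    (α : Fin 3 → (Fin 3 → ℝ) → ℝ → 𝔨)
    (hα : ∀ j x s, α j x s = deriv (fun σ => 𝔞 j x σ) s
      + ε • ((1 / 2 : ℝ) • ∑ k, ∑ l, eps j k l • curvK β 𝔞 k l x s)) :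
    ∀ j x (s : ℝ), 0 ≤ s →
      deriv (fun σ => α j x σ) s =
        ε • ∑ k, ∑ l, eps j k l •
          (pd3 k (fun y => α l y s) x + β (𝔞 k x s) (α l x s)) := by
  classical
  -- skew-symmetry of the bracket
  have hskew : ∀ a b : 𝔨, β a b = -β b a := by
    intro a b
    have h2 := halt (a + b)
    simp only [map_add, LinearMap.add_apply, halt, zero_add, add_zero] at h2
    exact eq_neg_of_add_eq_zero_right h2
  intro j x s hs
  set p : (Fin 3 → ℝ) × ℝ := (x, s) with hp
  -- the gauge potential as functions on space-time
  set g : Fin 3 → ((Fin 3 → ℝ) × ℝ) → 𝔨 := fun k q => 𝔞 k q.1 q.2 with hgdef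
  have hg : ∀ k, ContDiff ℝ (⊤ : ℕ∞) (g k) := fun k => h𝔞 k
  have hgd : ∀ k, Differentiable ℝ (g k) := fun k => (hg k).differentiable (by simp)
  -- directional derivatives of the potential, as smooth functions on space-time
  set tf : Fin 3 → ((Fin 3 → ℝ) × ℝ) → 𝔨 :=
    fun l q => fderiv ℝ (g l) q ((0 : Fin 3 → ℝ), (1 : ℝ)) with htfdef
  have hfd_smooth : ∀ (l : Fin 3) (u : (Fin 3 → ℝ) × ℝ),
      ContDiff ℝ (⊤ : ℕ∞) (fun q => fderiv ℝ (g l) q u) := fun l u =>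
    ((hg l).fderiv_right (by simp)).clm_apply contDiff_const
  have htf : ∀ l, ContDiff ℝ (⊤ : ℕ∞) (tf l) := fun l => hfd_smooth l _
  -- the curvature as a smooth function on space-time
  set cf : Fin 3 → Fin 3 → ((Fin 3 → ℝ) × ℝ) → 𝔨 := fun m n q =>
    fderiv ℝ (g n) q (Pi.single m 1, 0) - fderiv ℝ (g m) q (Pi.single n 1, 0)
      + YMaux.Bclm β (g m q) (g n q) with hcfdef
  have hB : ContDiff ℝ (⊤ : ℕ∞) (fun z : 𝔨 × 𝔨 => YMaux.Bclm β z.1 z.2) :=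
    (YMaux.Bclm β).isBoundedBilinearMap.contDiff
  have hcf : ∀ m n, ContDiff ℝ (⊤ : ℕ∞) (cf m n) := fun m n =>
    ((hfd_smooth n _).sub (hfd_smooth m _)).add (hB.comp (ContDiff.prodMk (hg m) (hg n)))
  -- pointwise identities
  have hderiv_a : ∀ (k : Fin 3) (y : Fin 3 → ℝ) (σ : ℝ),
      HasDerivAt (fun τ => 𝔞 k y τ) (tf k (y, σ)) σ := fun k y σ =>
    YMaux.hasDerivAt_slice (hgd k) y σ
  have hderiv_a' : ∀ (k : Fin 3) (y : Fin 3 → ℝ) (σ : ℝ),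
      deriv (fun τ => 𝔞 k y τ) σ = tf k (y, σ) := fun k y σ => (hderiv_a k y σ).deriv
  have hpd3_a : ∀ (m n : Fin 3) (y : Fin 3 → ℝ) (σ : ℝ),
      pd3 m (fun z => 𝔞 n z σ) y = fderiv ℝ (g n) (y, σ) (Pi.single m 1, 0) := by
    intro m n y σ
    have h2 := (YMaux.hasFDerivAt_slice (hgd n) y σ).fderiv
    show fderiv ℝ (fun z => 𝔞 n z σ) y (Pi.single m 1) = _
    rw [show (fun z => 𝔞 n z σ) = (fun z => g n (z, σ)) from rfl, h2]
    rfl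
  have hcurv : ∀ (m n : Fin 3) (y : Fin 3 → ℝ) (σ : ℝ),
      curvK β 𝔞 m n y σ = cf m n (y, σ) := by
    intro m n y σ
    rw [curvK, hpd3_a, hpd3_a, hcfdef]
    rfl
  have hαfun : ∀ (l : Fin 3) (y : Fin 3 → ℝ) (σ : ℝ),
      α l y σ = tf l (y, σ)
        + ε • ((1 / 2 : ℝ) • ∑ m, ∑ n, eps l m n • cf m n (y, σ)) := by
    intro l y σ
    rw [hα, hderiv_a']
    congr 3
    exact Finset.sum_congr rfl fun m _ => Finset.sum_congr rfl fun n _ => by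
      rw [hcurv]
  -- skew-symmetry and diagonal vanishing of the curvature
  have hcf_skew : ∀ (m n : Fin 3) (q : (Fin 3 → ℝ) × ℝ), cf m n q = -cf n m q := by
    intro m n q
    simp only [hcfdef, YMaux.Bclm_apply]
    rw [hskew (g m q) (g n q)]
    abel
  have hcf_diag : ∀ (m : Fin 3) (q : (Fin 3 → ℝ) × ℝ), cf m m q = 0 := by
    intro m q
    simp [hcfdef, YMaux.Bclm_apply, halt]
  -- atoms
  set A : Fin 3 → 𝔨 := fun k => 𝔞 k x s with hA
  set Dt : Fin 3 → 𝔨 := fun l => tf l p with hDt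
  set PD : Fin 3 → Fin 3 → 𝔨 := fun k l => fderiv ℝ (tf l) p (Pi.single k 1, 0) with hPD
  set C : Fin 3 → Fin 3 → 𝔨 := fun m n => cf m n p with hC
  set PC : Fin 3 → Fin 3 → Fin 3 → 𝔨 :=
    fun k m n => fderiv ℝ (cf m n) p (Pi.single k 1, 0) with hPC
  set DD : 𝔨 := fderiv ℝ (tf j) p ((0 : Fin 3 → ℝ), (1 : ℝ)) with hDD
  -- time derivative of the curvature
  have hderiv_cf : ∀ (k l : Fin 3),
      HasDerivAt (fun σ => cf k l (x, σ))
        (PD k l - PD l k + β (Dt k) (A l) + β (A k) (Dt l)) s := by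
    intro k l
    have p1 : HasDerivAt (fun σ => fderiv ℝ (g l) (x, σ) (Pi.single k 1, 0)) (PD k l) s := by
      have h2 := YMaux.hasDerivAt_slice
        ((hfd_smooth l (Pi.single k 1, 0)).differentiable (by simp)) x s
      rwa [YMaux.mixed_symm (hg l) (Pi.single k 1, 0) ((0 : Fin 3 → ℝ), (1 : ℝ)) (x, s)] at h2
    have p2 : HasDerivAt (fun σ => fderiv ℝ (g k) (x, σ) (Pi.single l 1, 0)) (PD l k) s := by
      have h2 := YMaux.hasDerivAt_slice
        ((hfd_smooth k (Pi.single l 1, 0)).differentiable (by simp)) x s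
      rwa [YMaux.mixed_symm (hg k) (Pi.single l 1, 0) ((0 : Fin 3 → ℝ), (1 : ℝ)) (x, s)] at h2
    have hc : HasDerivAt (fun σ => YMaux.Bclm β (𝔞 k x σ)) (YMaux.Bclm β (Dt k)) s :=
      (YMaux.Bclm β).hasFDerivAt.comp_hasDerivAt s (hderiv_a k x s)
    have p3 : HasDerivAt (fun σ => YMaux.Bclm β (𝔞 k x σ) (𝔞 l x σ))
        (YMaux.Bclm β (Dt k) (A l) + YMaux.Bclm β (A k) (Dt l)) s :=
      hc.clm_apply (hderiv_a l x s)
    have h4 := (p1.sub p2).add p3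
    simp only [YMaux.Bclm_apply] at h4
    rw [show PD k l - PD l k + β (Dt k) (A l) + β (A k) (Dt l)
      = PD k l - PD l k + (β (Dt k) (A l) + β (A k) (Dt l)) from add_assoc _ _ _]
    exact h4
  -- (1) time derivative of α
  have hL : deriv (fun σ => α j x σ) s =
      DD + ε • ((1 / 2 : ℝ) • ∑ k, ∑ l, eps j k l •
        (PD k l - PD l k + β (Dt k) (A l) + β (A k) (Dt l))) := by
    have ht : HasDerivAt (fun σ => tf j (x, σ)) DD s :=
      YMaux.hasDerivAt_slice ((htf j).differentiable (by simp)) x s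
    have hsum : HasDerivAt
        (fun σ => ε • ((1 / 2 : ℝ) • ∑ k, ∑ l, eps j k l • cf k l (x, σ)))
        (ε • ((1 / 2 : ℝ) • ∑ k, ∑ l, eps j k l •
          (PD k l - PD l k + β (Dt k) (A l) + β (A k) (Dt l)))) s := by
      refine HasDerivAt.const_smul ε (HasDerivAt.const_smul _ ?_)
      refine HasDerivAt.fun_sum fun k _ => ?_
      refine HasDerivAt.fun_sum fun l _ => ?_
      exact (hderiv_cf k l).const_smul _
    have htot := ht.fun_add hsum
    have hfun : (fun σ => α j x σ) = fun σ =>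
        tf j (x, σ) + ε • ((1 / 2 : ℝ) • ∑ k, ∑ l, eps j k l • cf k l (x, σ)) :=
      funext fun σ => hαfun j x σ
    rw [hfun]
    exact htot.deriv
  -- (2) spatial covariant derivative of α
  have hpd3α : ∀ (k l : Fin 3), pd3 k (fun y => α l y s) x =
      PD k l + ε • ((1 / 2 : ℝ) • ∑ m, ∑ n, eps l m n • PC k m n) := by
    intro k l
    have q1 : HasFDerivAt (fun y => tf l (y, s))
        ((fderiv ℝ (tf l) p).comp (ContinuousLinearMap.inl ℝ (Fin 3 → ℝ) ℝ)) x :=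
      YMaux.hasFDerivAt_slice ((htf l).differentiable (by simp)) x s
    have q2 : ∀ m n : Fin 3, HasFDerivAt (fun y => cf m n (y, s))
        ((fderiv ℝ (cf m n) p).comp (ContinuousLinearMap.inl ℝ (Fin 3 → ℝ) ℝ)) x :=
      fun m n => YMaux.hasFDerivAt_slice ((hcf m n).differentiable (by simp)) x s
    have hsum : HasFDerivAt
        (fun y => ε • ((1 / 2 : ℝ) • ∑ m, ∑ n, eps l m n • cf m n (y, s)))
        (ε • ((1 / 2 : ℝ) • ∑ m, ∑ n, eps l m n •
          ((fderiv ℝ (cf m n) p).comp (ContinuousLinearMap.inl ℝ (Fin 3 → ℝ) ℝ)))) x := by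
      refine HasFDerivAt.const_smul (HasFDerivAt.const_smul ?_ _) ε
      refine HasFDerivAt.fun_sum fun m _ => ?_
      refine HasFDerivAt.fun_sum fun n _ => ?_
      exact (q2 m n).const_smul _
    have htot := q1.fun_add hsum
    have hfun : (fun y => α l y s) = fun y =>
        tf l (y, s) + ε • ((1 / 2 : ℝ) • ∑ m, ∑ n, eps l m n • cf m n (y, s)) :=
      funext fun y => hαfun l y s
    show fderiv ℝ (fun y => α l y s) x (Pi.single k 1) = _
    rw [hfun, htot.fderiv]
    simp only [ContinuousLinearMap.add_apply, ContinuousLinearMap.smul_apply,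
      ContinuousLinearMap.coe_sum', Finset.sum_apply, ContinuousLinearMap.coe_comp',
      Function.comp_apply, ContinuousLinearMap.inl_apply]
    rfl
  -- (3) the Yang–Mills–Poisson equation in terms of the atoms
  have hYMP' : DD = -∑ k, (PC k k j + β (A k) (C k j)) := by
    have h0 := hYMP j x s hs
    have e1 : (fun τ => deriv (fun σ => 𝔞 j x σ) τ) = fun τ => tf j (x, τ) :=
      funext fun τ => hderiv_a' j x τ
    rw [e1] at h0
    have e2 : deriv (fun τ => tf j (x, τ)) s = DD :=
      (YMaux.hasDerivAt_slice ((htf j).differentiable (by simp)) x s).deriv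
    rw [e2] at h0
    have e5 : ∀ k : Fin 3, pd3 k (fun y => curvK β 𝔞 k j y s) x = PC k k j := by
      intro k
      have e3 : (fun y => curvK β 𝔞 k j y s) = fun y => cf k j (y, s) :=
        funext fun y => hcurv k j y s
      have e4 := (YMaux.hasFDerivAt_slice ((hcf k j).differentiable (by simp)) x s).fderiv
      show fderiv ℝ (fun y => curvK β 𝔞 k j y s) x (Pi.single k 1) = _
      rw [e3, e4]
      rfl
    have e6 : ∀ k : Fin 3, (β (𝔞 k x s)) (curvK β 𝔞 k j x s) = (β (A k)) (C k j) := by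
      intro k
      rw [hcurv k j x s]
    rw [h0]
    simp only [e5, e6]
  -- assemble
  have hCskew : ∀ m n, C m n = -C n m := fun m n => hcf_skew m n p
  have hCdiag : ∀ m, C m m = 0 := fun m => hcf_diag m p
  have hPCskew : ∀ k m n, PC k m n = -PC k n m := by
    intro k m n
    have e3 : cf m n = fun q => -cf n m q := funext fun q => hcf_skew m n q
    show fderiv ℝ (cf m n) p (Pi.single k 1, 0) = _
    rw [e3, fderiv_fun_neg]
    simp [hPC]
  have hPCdiag : ∀ k m, PC k m m = 0 := by
    intro k m
    have e3 : cf m m = fun _ => (0 : 𝔨) := funext fun q => hcf_diag m q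
    show fderiv ℝ (cf m m) p (Pi.single k 1, 0) = 0
    rw [e3]
    simp [fderiv_const]
  have hαval : ∀ l : Fin 3, α l x s = Dt l
      + ε • ((1 / 2 : ℝ) • ∑ m, ∑ n, eps l m n • C m n) := fun l => hαfun l x s
  rw [hL]
  simp only [hpd3α, hαval]
  exact YMaux.algebra_core β hskew ε hε j A Dt PD C PC DD
    hCskew hCdiag hPCskew hPCdiag hYMP'
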